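/- Let R₀ be a commutative ring, m ≤ n positive integers, R = R₀[{A_{ij}}_{1≤i≤m, 1≤j≤n}] the polynomial ring over R₀ in the mn variables A_{ij}, and S = R[X₁, …, X_n]. Let c₁, …, c_m ∈ R be arbitrary, and define L_i = (∑_{j=1}^n A_{ij}·X_j) − c_i ∈ S. Then L₁, …, L_m is a regular sequence in S: for each i = 1, …, m, the image of L_i in S/(L₁, …, L_{i−1}) is a non-zero-divisor. -/

import Mathlib

open MvPolynomial

namespace Stmt13Aux

variable {R : Type*} [CommRing R] {σ : Type*} [DecidableEq σ]
variable {M : Type*} [AddCommMonoid M] [LinearOrder M] [IsOrderedCancelAddMonoid M] [WellFoundedLT M]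
variable (ψ : (σ →₀ ℕ) →+ M)

theorem supp_mul_decomp {p q : MvPolynomial σ R} {d : σ →₀ ℕ}
    (hd : d ∈ (p * q).support) : ∃ a ∈ p.support, ∃ b ∈ q.support, a + b = d := by
  have := MvPolynomial.support_mul p q hd
  rwa [Finset.mem_add] at this

variable (hψ : Function.Injective ψ)

include hψ in
omit [WellFoundedLT M] in
theorem coeff_mul_top {p q : MvPolynomial σ R} {a₀ b₀ : σ →₀ ℕ}
    (ha : ∀ a ∈ p.support, ψ a ≤ ψ a₀) (hb : ∀ b ∈ q.support, ψ b ≤ ψ b₀) :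
    coeff (a₀ + b₀) (p * q) = coeff a₀ p * coeff b₀ q := by
  rw [coeff_mul]
  apply Finset.sum_eq_single (a₀, b₀)
  · rintro ⟨a, b⟩ hab hne
    rw [Finset.HasAntidiagonal.mem_antidiagonal] at hab
    rcases eq_or_ne (coeff a p) 0 with h | h
    · simp [h]
    rcases eq_or_ne (coeff b q) 0 with h' | h'
    · simp [h']
    exfalso
    have h1 : ψ a ≤ ψ a₀ := ha a (mem_support_iff.mpr h)
    have h2 : ψ b ≤ ψ b₀ := hb b (mem_support_iff.mpr h')
    have hsum : ψ a + ψ b = ψ a₀ + ψ b₀ := by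
      rw [← map_add, ← map_add, hab]
    have hae : ψ a = ψ a₀ := by
      rcases lt_or_eq_of_le h1 with h1' | h1'
      · exact absurd hsum (ne_of_lt (add_lt_add_of_lt_of_le h1' h2))
      · exact h1'
    have hbe : ψ b = ψ b₀ := by
      have := hsum
      rw [hae] at this
      exact add_left_cancel this
    exact hne (by rw [hψ hae, hψ hbe])
  · intro h
    exfalso
    apply h
    rw [Finset.HasAntidiagonal.mem_antidiagonal]

open scoped Classical in
include hψ in
theorem gb_aux {K : Type*} [Fintype K] (P : K → MvPolynomial σ R) (μ : K → σ →₀ ℕ)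
    (hcoeff : ∀ k, coeff (μ k) (P k) = (1 : R))
    (hmax : ∀ k, ∀ d ∈ (P k).support, ψ d ≤ ψ (μ k))
    (hdisj : ∀ k l, k ≠ l → ∀ s, μ k s = 0 ∨ μ l s = 0)
    (ν : M) :
    ∀ (t : ℕ) (g : K → MvPolynomial σ R),
      (∀ k, ∀ d ∈ (g k).support, ψ d + ψ (μ k) ≤ ν) →
      (Finset.univ.filter fun k => ∃ d ∈ (g k).support, ψ d + ψ (μ k) = ν).card ≤ t →
      (∑ k, g k * P k) ≠ 0 →
      ∃ k, ∃ D ∈ (∑ k, g k * P k).support,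
        (∀ d ∈ (∑ k, g k * P k).support, ψ d ≤ ψ D) ∧ μ k ≤ D := by
  induction ν using WellFoundedLT.induction with
  | _ ν ihν =>
  intro t
  induction t with
  | zero =>
    intro g hb hc hne
    -- route C : the bound is not attained, find a strictly smaller bound
    have hKempty :
        (Finset.univ.filter fun k => ∃ d ∈ (g k).support, ψ d + ψ (μ k) = ν) = ∅ :=
      Finset.card_eq_zero.mp (Nat.le_zero.mp hc)
    have hex : ∃ k, g k ≠ 0 := by
      by_contra hall
      push_neg at hall
      exact hne (Finset.sum_eq_zero fun k _ => by rw [hall k, zero_mul])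
    obtain ⟨k₁, hk₁⟩ := hex
    set Vals : Finset M :=
      Finset.univ.biUnion (fun k => (g k).support.image fun d => ψ d + ψ (μ k)) with hVals
    have hmem : ∀ k, ∀ d ∈ (g k).support, (ψ d + ψ (μ k)) ∈ Vals := by
      intro k d hd
      exact Finset.mem_biUnion.mpr ⟨k, Finset.mem_univ k,
        Finset.mem_image.mpr ⟨d, hd, rfl⟩⟩
    have hValsne : Vals.Nonempty := by
      obtain ⟨d, hd⟩ := (MvPolynomial.support_nonempty).mpr hk₁
      exact ⟨_, hmem k₁ d hd⟩
    have hlt : ∀ v ∈ Vals, v < ν := by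
      intro v hv
      obtain ⟨k, -, hv2⟩ := Finset.mem_biUnion.mp hv
      obtain ⟨d, hd, rfl⟩ := Finset.mem_image.mp hv2
      refine lt_of_le_of_ne (hb k d hd) ?_
      intro heq
      have : k ∈ (Finset.univ.filter
          fun k => ∃ d ∈ (g k).support, ψ d + ψ (μ k) = ν) :=
        Finset.mem_filter.mpr ⟨Finset.mem_univ k, d, hd, heq⟩
      rw [hKempty] at this
      exact absurd this (Finset.notMem_empty k)
    have hν' : Vals.max' hValsne < ν := (Finset.max'_lt_iff _ hValsne).mpr hlt
    exact ihν (Vals.max' hValsne) hν' _ g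
      (fun k d hd => Finset.le_max' _ _ (hmem k d hd)) le_rfl hne
  | succ t iht =>
    intro g hb hc hne
    by_cases hK' : (Finset.univ.filter
        fun k => ∃ d ∈ (g k).support, ψ d + ψ (μ k) = ν).Nonempty
    swap
    · refine iht g hb ?_ hne
      rw [Finset.not_nonempty_iff_eq_empty] at hK'
      rw [hK']
      simp
    obtain ⟨k₀, hk₀K'⟩ := hK'
    obtain ⟨-, d₀, hd₀, hd₀eq⟩ := Finset.mem_filter.mp hk₀K'
    have hpsitop : ψ (d₀ + μ k₀) = ν := by rw [map_add]; exact hd₀eq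
    have hg0max : ∀ a ∈ (g k₀).support, ψ a ≤ ψ d₀ := by
      intro a ha
      have h1 : ψ a + ψ (μ k₀) ≤ ψ d₀ + ψ (μ k₀) := by
        rw [hd₀eq]; exact hb k₀ a ha
      exact le_of_add_le_add_right h1
    by_cases hctop : coeff (d₀ + μ k₀) (∑ k, g k * P k) = 0
    swap
    · -- the top coefficient survives
      have humax : ∀ d ∈ (∑ k, g k * P k).support, ψ d ≤ ψ (d₀ + μ k₀) := by
        intro d hd
        obtain ⟨k, -, hk⟩ := Finset.mem_biUnion.mp (MvPolynomial.support_sum hd)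
        obtain ⟨a, ha, b, hbP, hab⟩ := supp_mul_decomp hk
        calc ψ d = ψ a + ψ b := by rw [← hab, map_add]
          _ ≤ ψ a + ψ (μ k) := add_le_add_right (hmax k b hbP) _
          _ ≤ ν := hb k a ha
          _ = ψ (d₀ + μ k₀) := hpsitop.symm
      have hexk : ∃ k, coeff (d₀ + μ k₀) (g k * P k) ≠ 0 := by
        by_contra hall
        push_neg at hall
        apply hctop
        rw [MvPolynomial.coeff_sum]
        exact Finset.sum_eq_zero fun k _ => hall k
      obtain ⟨k, hk⟩ := hexk
      obtain ⟨a, ha, b, hbP, hab⟩ := supp_mul_decomp (mem_support_iff.mpr hk)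
      have h1 : ψ a + ψ b = ν := by rw [← map_add, hab, hpsitop]
      have hbμ : b = μ k := by
        refine hψ (le_antisymm (hmax k b hbP) ?_)
        have : ψ a + ψ (μ k) ≤ ψ a + ψ b := h1 ▸ hb k a ha
        exact le_of_add_le_add_left this
      exact ⟨k, d₀ + μ k₀, mem_support_iff.mpr hctop, humax,
        by rw [← hab, hbμ]; exact le_add_self⟩
    · -- top coefficient cancels
      by_cases h2 : ∃ l ∈ (Finset.univ.filter
          fun k => ∃ d ∈ (g k).support, ψ d + ψ (μ k) = ν), l ≠ k₀
      swap
      · -- K' = {k₀} : contradiction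
        exfalso
        push_neg at h2
        have hzero : ∀ k, k ≠ k₀ → coeff (d₀ + μ k₀) (g k * P k) = 0 := by
          intro k hkne
          by_contra hc0
          obtain ⟨a, ha, b, hbP, hab⟩ := supp_mul_decomp (mem_support_iff.mpr hc0)
          have h1 : ψ a + ψ b = ν := by rw [← map_add, hab, hpsitop]
          have hbμ : ψ b = ψ (μ k) := by
            refine le_antisymm (hmax k b hbP) ?_
            have : ψ a + ψ (μ k) ≤ ψ a + ψ b := h1 ▸ hb k a ha
            exact le_of_add_le_add_left this
          have : k ∈ (Finset.univ.filter
              fun k => ∃ d ∈ (g k).support, ψ d + ψ (μ k) = ν) :=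
            Finset.mem_filter.mpr ⟨Finset.mem_univ k, a, ha, by rw [← hbμ]; exact h1⟩
          exact hkne (h2 k this)
        have hthis : coeff (d₀ + μ k₀) (∑ k, g k * P k) = coeff d₀ (g k₀) := by
          rw [MvPolynomial.coeff_sum]
          rw [Finset.sum_eq_single k₀ (fun k _ hkne => hzero k hkne)
            (fun h => absurd (Finset.mem_univ k₀) h)]
          rw [coeff_mul_top ψ hψ hg0max (hmax k₀), hcoeff k₀, mul_one]
        rw [hctop] at hthis
        exact absurd hthis.symm (mem_support_iff.mp hd₀)
      · -- rewrite step
        obtain ⟨l, hlK', hlne⟩ := h2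
        obtain ⟨-, dl, hdl, hdleq⟩ := Finset.mem_filter.mp hlK'
        have hdlm : dl + μ l = d₀ + μ k₀ := by
          apply hψ
          rw [map_add, map_add, hd₀eq, hdleq]
        have hμle : μ k₀ + μ l ≤ d₀ + μ k₀ := by
          rw [Finsupp.le_def]
          intro s
          have e2 : dl s + μ l s = d₀ s + μ k₀ s := by
            rw [← Finsupp.add_apply, ← Finsupp.add_apply, hdlm]
          rcases hdisj k₀ l (fun h => hlne h.symm) s with h | h <;>
            simp only [Finsupp.add_apply] <;> omega
        set τ := (d₀ + μ k₀) - (μ k₀ + μ l) with hτdef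
        have hτeq : τ + (μ k₀ + μ l) = d₀ + μ k₀ := tsub_add_cancel_of_le hμle
        have hd₀τ : d₀ = τ + μ l := by
          have h' : (τ + μ l) + μ k₀ = d₀ + μ k₀ := by
            rw [add_assoc, add_comm (μ l) (μ k₀)]; exact hτeq
          exact (add_right_cancel h').symm
        have hadd2 : τ + μ k₀ + μ l = d₀ + μ k₀ := by
          rw [add_assoc]; exact hτeq
        set c := coeff d₀ (g k₀) with hcdef
        set pl := P l - monomial (μ l) 1 with hpl
        set g' := fun j => if j = k₀ then g k₀ - monomial d₀ c - monomial τ c * pl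
          else if j = l then g l + monomial τ c * P k₀ else g j with hg'
        have hne_k₀l : ¬ (k₀ = l) := fun h => hlne h.symm
        have hg'k₀ : g' k₀ = g k₀ - monomial d₀ c - monomial τ c * pl := by
          simp [hg']
        have hg'l : g' l = g l + monomial τ c * P k₀ := by
          simp [hg', hlne]
        have hg'other : ∀ j, j ≠ k₀ → j ≠ l → g' j = g j := by
          intro j h1 h2
          simp [hg', h1, h2]
        have hsum : (∑ j, g' j * P j) = ∑ j, g j * P j := by
          have hmono : (monomial d₀ c : MvPolynomial σ R)
              = monomial τ c * monomial (μ l) 1 := by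
            rw [MvPolynomial.monomial_mul, mul_one, hd₀τ]
          calc (∑ j, g' j * P j)
              = ∑ j, (g j * P j
                + (if j = k₀ then ((- monomial d₀ c) - monomial τ c * pl) * P k₀ else 0)
                + (if j = l then (monomial τ c * P k₀) * P l else 0)) := by
                refine Finset.sum_congr rfl fun j _ => ?_
                by_cases hj : j = k₀
                · subst hj
                  rw [if_pos rfl, if_neg hne_k₀l, hg'k₀]
                  ring
                · by_cases hj' : j = l
                  · rw [hj', if_neg (fun h => hlne h), if_pos rfl, hg'l]
                    ring
                  · rw [if_neg hj, if_neg hj', hg'other j hj hj']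
                    ring
            _ = (∑ j, g j * P j)
                + ((- monomial d₀ c - monomial τ c * pl) * P k₀)
                + ((monomial τ c * P k₀) * P l) := by
                rw [Finset.sum_add_distrib, Finset.sum_add_distrib,
                  Finset.sum_ite_eq' Finset.univ k₀, Finset.sum_ite_eq' Finset.univ l]
                simp
            _ = ∑ j, g j * P j := by
                rw [add_assoc]
                have hz : (- monomial d₀ c - monomial τ c * pl) * P k₀
                    + (monomial τ c * P k₀) * P l = 0 := by
                  rw [hmono, hpl]; ring
                rw [hz, add_zero]
        have hstrict_pl : ∀ b ∈ pl.support, ψ b < ψ (μ l) := by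
          intro b hbmem
          have hzμ : coeff (μ l) pl = 0 := by
            rw [hpl, coeff_sub, hcoeff l, coeff_monomial, if_pos rfl]
            ring
          have hbne : b ≠ μ l := fun h => (mem_support_iff.mp hbmem) (by rw [h]; exact hzμ)
          have hble : b ∈ (P l).support := by
            rcases Finset.mem_union.mp (MvPolynomial.support_sub _ _ _ hbmem) with h | h
            · exact h
            · exact absurd (Finset.mem_singleton.mp (support_monomial_subset h)) hbne
          exact lt_of_le_of_ne (hmax l b hble) fun h => hbne (hψ h)
        have hbk0 : ∀ d ∈ (g' k₀).support, ψ d + ψ (μ k₀) < ν := by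
          intro d hd
          rw [hg'k₀, sub_sub] at hd
          rw [show g k₀ - (monomial d₀ c + monomial τ c * pl)
              = (g k₀ - monomial d₀ c) - monomial τ c * pl by ring] at hd
          rcases Finset.mem_union.mp (MvPolynomial.support_sub _ _ _ hd) with h | h
          · have hdc : coeff d₀ (g k₀ - monomial d₀ c) = 0 := by
              rw [coeff_sub, coeff_monomial, if_pos rfl, hcdef]
              ring
            have hdne : d ≠ d₀ := fun heq => (mem_support_iff.mp h) (heq ▸ hdc)
            have hdg : d ∈ (g k₀).support := by
              rcases Finset.mem_union.mp (MvPolynomial.support_sub _ _ _ h) with h' | h'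
              · exact h'
              · exact absurd (Finset.mem_singleton.mp (support_monomial_subset h')) hdne
            have hlt : ψ d < ψ d₀ :=
              lt_of_le_of_ne (hg0max d hdg) fun h => hdne (hψ h)
            calc ψ d + ψ (μ k₀) < ψ d₀ + ψ (μ k₀) := add_lt_add_left hlt _
              _ = ν := hd₀eq
          · obtain ⟨a, haτ, b, hbpl, hab⟩ := supp_mul_decomp h
            have haτ' : a = τ := Finset.mem_singleton.mp (support_monomial_subset haτ)
            calc ψ d + ψ (μ k₀) = ψ τ + ψ b + ψ (μ k₀) := by
                  rw [← hab, haτ', map_add]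
              _ < ψ τ + ψ (μ l) + ψ (μ k₀) :=
                  add_lt_add_left (add_lt_add_right (hstrict_pl b hbpl) _) _
              _ = ν := by
                  rw [← map_add, ← map_add, add_assoc, add_comm (μ l) (μ k₀), hτeq, hpsitop]
        have hb' : ∀ j, ∀ d ∈ (g' j).support, ψ d + ψ (μ j) ≤ ν := by
          intro j d hd
          by_cases hj : j = k₀
          · subst hj; exact le_of_lt (hbk0 d hd)
          by_cases hj' : j = l
          · rw [hj'] at hd ⊢
            rw [hg'l] at hd
            rcases Finset.mem_union.mp (MvPolynomial.support_add hd) with h | h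
            · exact hb l d h
            · obtain ⟨a, haτ, b, hbP, hab⟩ := supp_mul_decomp h
              have haτ' : a = τ := Finset.mem_singleton.mp (support_monomial_subset haτ)
              calc ψ d + ψ (μ l) = ψ τ + ψ b + ψ (μ l) := by
                    rw [← hab, haτ', map_add]
                _ ≤ ψ τ + ψ (μ k₀) + ψ (μ l) :=
                    add_le_add_left (add_le_add_right (hmax k₀ b hbP) _) _
                _ = ν := by rw [← map_add, ← map_add, hadd2, hpsitop]
          · rw [hg'other j hj hj'] at hd
            exact hb j d hd
        have hsub : (Finset.univ.filter
              fun k => ∃ d ∈ (g' k).support, ψ d + ψ (μ k) = ν)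
            ⊆ (Finset.univ.filter
              fun k => ∃ d ∈ (g k).support, ψ d + ψ (μ k) = ν).erase k₀ := by
          intro j hj
          obtain ⟨-, d, hd, hdeq⟩ := Finset.mem_filter.mp hj
          have hjk₀ : j ≠ k₀ := by
            rintro rfl
            exact absurd hdeq (ne_of_lt (hbk0 d hd))
          refine Finset.mem_erase.mpr ⟨hjk₀, ?_⟩
          by_cases hjl : j = l
          · rw [hjl]; exact hlK'
          · rw [hg'other j hjk₀ hjl] at hd
            exact Finset.mem_filter.mpr ⟨Finset.mem_univ _, d, hd, hdeq⟩
        have hcard' : (Finset.univ.filter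
            fun k => ∃ d ∈ (g' k).support, ψ d + ψ (μ k) = ν).card ≤ t := by
          have h1 := Finset.card_le_card hsub
          rw [Finset.card_erase_of_mem hk₀K'] at h1
          have h2 : 1 ≤ (Finset.univ.filter
              fun k => ∃ d ∈ (g k).support, ψ d + ψ (μ k) = ν).card :=
            Finset.card_pos.mpr ⟨k₀, hk₀K'⟩
          omega
        have hres := iht g' hb' hcard' (by rw [hsum]; exact hne)
        rwa [hsum] at hres

open scoped Classical in
include hψ in
theorem gb {K : Type*} [Fintype K] (P : K → MvPolynomial σ R) (μ : K → σ →₀ ℕ)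
    (hcoeff : ∀ k, coeff (μ k) (P k) = (1 : R))
    (hmax : ∀ k, ∀ d ∈ (P k).support, ψ d ≤ ψ (μ k))
    (hdisj : ∀ k l, k ≠ l → ∀ s, μ k s = 0 ∨ μ l s = 0)
    (g : K → MvPolynomial σ R) (hne : (∑ k, g k * P k) ≠ 0) :
    ∃ k, ∃ D ∈ (∑ k, g k * P k).support,
      (∀ d ∈ (∑ k, g k * P k).support, ψ d ≤ ψ D) ∧ μ k ≤ D := by
  have hex : ∃ k, g k ≠ 0 := by
    by_contra hall
    push_neg at hall
    exact hne (Finset.sum_eq_zero fun k _ => by rw [hall k, zero_mul])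
  obtain ⟨k₁, hk₁⟩ := hex
  set Vals : Finset M :=
    Finset.univ.biUnion (fun k => (g k).support.image fun d => ψ d + ψ (μ k)) with hVals
  have hmem : ∀ k, ∀ d ∈ (g k).support, (ψ d + ψ (μ k)) ∈ Vals := by
    intro k d hd
    exact Finset.mem_biUnion.mpr ⟨k, Finset.mem_univ k,
      Finset.mem_image.mpr ⟨d, hd, rfl⟩⟩
  have hValsne : Vals.Nonempty := by
    obtain ⟨d, hd⟩ := (MvPolynomial.support_nonempty).mpr hk₁
    exact ⟨_, hmem k₁ d hd⟩
  exact gb_aux ψ hψ P μ hcoeff hmax hdisj (Vals.max' hValsne) _ g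
    (fun k d hd => Finset.le_max' _ _ (hmem k d hd)) le_rfl hne

include hψ in
theorem reg {K : Type*} [Fintype K] (P : K → MvPolynomial σ R) (μ : K → σ →₀ ℕ)
    (hcoeff : ∀ k, coeff (μ k) (P k) = (1 : R))
    (hmax : ∀ k, ∀ d ∈ (P k).support, ψ d ≤ ψ (μ k))
    (hdisj : ∀ k l, k ≠ l → ∀ s, μ k s = 0 ∨ μ l s = 0)
    (Pi : MvPolynomial σ R) (μi : σ →₀ ℕ)
    (hci : coeff μi Pi = 1)
    (hmi : ∀ d ∈ Pi.support, ψ d ≤ ψ μi)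
    (hdi : ∀ k s, μ k s = 0 ∨ μi s = 0)
    (f : MvPolynomial σ R) (hf : f * Pi ∈ Ideal.span (Set.range P)) :
    f ∈ Ideal.span (Set.range P) := by
  suffices H : ∀ ν : M, ∀ f : MvPolynomial σ R, (∀ d ∈ f.support, ψ d ≤ ν) →
      f * Pi ∈ Ideal.span (Set.range P) → f ∈ Ideal.span (Set.range P) by
    by_cases hf0 : f = 0
    · rw [hf0]; exact Ideal.zero_mem _
    · obtain ⟨d₂, hd₂, hd₂max⟩ :=
        Finset.exists_max_image f.support ψ ((MvPolynomial.support_nonempty).mpr hf0)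
      exact H (ψ d₂) f hd₂max hf
  intro ν
  induction ν using WellFoundedLT.induction with
  | _ ν ihν =>
  intro f hbd hmem
  by_cases hf0 : f = 0
  · rw [hf0]; exact Ideal.zero_mem _
  obtain ⟨d₀, hd₀, hd₀max⟩ :=
    Finset.exists_max_image f.support ψ ((MvPolynomial.support_nonempty).mpr hf0)
  have hctop : coeff (d₀ + μi) (f * Pi) = coeff d₀ f := by
    rw [coeff_mul_top ψ hψ hd₀max hmi, hci, mul_one]
  have hune : f * Pi ≠ 0 := by
    intro h
    rw [h, coeff_zero] at hctop
    exact (mem_support_iff.mp hd₀) hctop.symm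
  obtain ⟨g, hg⟩ := Ideal.mem_span_range_iff_exists_fun.mp hmem
  have hsumne : (∑ k, g k * P k) ≠ 0 := by rw [hg]; exact hune
  obtain ⟨k, D, hDmem, hDmax, hμD⟩ := gb ψ hψ P μ hcoeff hmax hdisj g hsumne
  rw [hg] at hDmem hDmax
  have hD : D = d₀ + μi := by
    refine hψ (le_antisymm ?_ ?_)
    · obtain ⟨a, ha, b, hb, hab⟩ := supp_mul_decomp hDmem
      rw [← hab, map_add, map_add]
      exact add_le_add (hd₀max a ha) (hmi b hb)
    · exact hDmax _ (mem_support_iff.mpr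
        (by rw [hctop]; exact mem_support_iff.mp hd₀))
  have hμd₀ : μ k ≤ d₀ := by
    rw [Finsupp.le_def]
    intro s
    rcases hdi k s with h | h
    · rw [h]; exact Nat.zero_le _
    · have h2 := (Finsupp.le_def.mp hμD) s
      rw [hD] at h2
      simpa [Finsupp.add_apply, h] using h2
  classical
  set δ := d₀ - μ k with hδdef
  have hδ : δ + μ k = d₀ := tsub_add_cancel_of_le hμd₀
  set cf := coeff d₀ f with hcf
  have hPk : P k ∈ Ideal.span (Set.range P) := Ideal.subset_span ⟨k, rfl⟩
  set f' := f - monomial δ cf * P k with hf'def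
  have hmem' : f' * Pi ∈ Ideal.span (Set.range P) := by
    have hrw : f' * Pi = f * Pi - (monomial δ cf * Pi) * P k := by
      rw [hf'def]; ring
    rw [hrw]
    exact sub_mem hmem (Ideal.mul_mem_left _ _ hPk)
  have hsuff : f' ∈ Ideal.span (Set.range P) → f ∈ Ideal.span (Set.range P) := by
    intro h
    have hrw : f = f' + monomial δ cf * P k := by rw [hf'def]; ring
    rw [hrw]
    exact Ideal.add_mem _ h (Ideal.mul_mem_left _ _ hPk)
  have hbound : ∀ d ∈ f'.support, ψ d < ψ d₀ := by
    have hmono : (monomial δ cf : MvPolynomial σ R) * monomial (μ k) 1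
        = monomial d₀ cf := by
      rw [MvPolynomial.monomial_mul, mul_one, hδ]
    have hrw : f' = (f - monomial d₀ cf) - monomial δ cf * (P k - monomial (μ k) 1) := by
      rw [hf'def, ← hmono]; ring
    intro d hd
    rw [hrw] at hd
    rcases Finset.mem_union.mp (MvPolynomial.support_sub _ _ _ hd) with h | h
    · have hdc : coeff d₀ (f - monomial d₀ cf) = 0 := by
        rw [coeff_sub, coeff_monomial, if_pos rfl, hcf]
        ring
      have hdne : d ≠ d₀ := fun heq => (mem_support_iff.mp h) (heq ▸ hdc)
      have hdf : d ∈ f.support := by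
        rcases Finset.mem_union.mp (MvPolynomial.support_sub _ _ _ h) with h' | h'
        · exact h'
        · exact absurd (Finset.mem_singleton.mp (support_monomial_subset h')) hdne
      exact lt_of_le_of_ne (hd₀max d hdf) fun h' => hdne (hψ h')
    · obtain ⟨a, haδ, b, hbp, hab⟩ := supp_mul_decomp h
      have haδ' : a = δ := Finset.mem_singleton.mp (support_monomial_subset haδ)
      have hzμ : coeff (μ k) (P k - monomial (μ k) 1) = 0 := by
        rw [coeff_sub, coeff_monomial, if_pos rfl, hcoeff k]
        ring
      have hbne : b ≠ μ k := fun h' => (mem_support_iff.mp hbp) (by rw [h']; exact hzμ)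
      have hbP : b ∈ (P k).support := by
        rcases Finset.mem_union.mp (MvPolynomial.support_sub _ _ _ hbp) with h' | h'
        · exact h'
        · exact absurd (Finset.mem_singleton.mp (support_monomial_subset h')) hbne
      have hblt : ψ b < ψ (μ k) := lt_of_le_of_ne (hmax k b hbP) fun h' => hbne (hψ h')
      calc ψ d = ψ δ + ψ b := by rw [← hab, haδ', map_add]
        _ < ψ δ + ψ (μ k) := add_lt_add_right hblt _
        _ = ψ d₀ := by rw [← map_add, hδ]
  by_cases hf'0 : f' = 0
  · exact hsuff (by rw [hf'0]; exact Ideal.zero_mem _)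
  · obtain ⟨d₂, hd₂, hd₂max⟩ :=
      Finset.exists_max_image f'.support ψ ((MvPolynomial.support_nonempty).mpr hf'0)
    have hlt : ψ d₂ < ν := lt_of_lt_of_le (hbound d₂ hd₂) (hbd d₀ hd₀)
    exact hsuff (ihν (ψ d₂) hlt f' hd₂max hmem')

section Application

variable (m n : ℕ)

/-- Variable type: `inl` are the `X`'s, `inr` are the `A`'s. -/
abbrev VT (m n : ℕ) := Fin n ⊕ (Fin m × Fin n)

def keyFn : VT m n → ℕ
  | Sum.inl l => m + m * n + (l : ℕ)
  | Sum.inr jl => if (jl.2 : ℕ) = (jl.1 : ℕ) then (jl.1 : ℕ)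
      else m + ((jl.1 : ℕ) * n + (jl.2 : ℕ))

lemma keyFn_inr_lt (jl : Fin m × Fin n) : keyFn m n (Sum.inr jl) < m + m * n := by
  have h2 : (jl.2 : ℕ) < n := jl.2.isLt
  have h3 : (jl.1 : ℕ) + 1 ≤ m := jl.1.isLt
  have h1 : (jl.1 : ℕ) * n + (jl.2 : ℕ) < m * n := by
    calc (jl.1 : ℕ) * n + (jl.2 : ℕ) < (jl.1 : ℕ) * n + n := by omega
      _ = ((jl.1 : ℕ) + 1) * n := by ring
      _ ≤ m * n := Nat.mul_le_mul_right n h3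
  simp only [keyFn]
  split <;> omega

lemma keyFn_lt (s : VT m n) : keyFn m n s < m + m * n + n := by
  cases s with
  | inl l => have := l.isLt; simp only [keyFn]; omega
  | inr jl => have := keyFn_inr_lt m n jl; omega

def kappa (s : VT m n) : Fin (1 + (m + m * n + n)) :=
  ⟨1 + keyFn m n s, by have := keyFn_lt m n s; omega⟩

lemma kappa_inj : Function.Injective (kappa m n) := by
  intro s t h
  have hk : keyFn m n s = keyFn m n t := by
    have := congrArg Fin.val h
    simp only [kappa] at this
    omega
  match s, t with
  | Sum.inl l, Sum.inl l' =>
    simp only [keyFn] at hk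
    exact congrArg _ (Fin.ext (by omega))
  | Sum.inl l, Sum.inr jl =>
    exfalso
    have h1 := keyFn_inr_lt m n jl
    have h2 : keyFn m n (Sum.inl l) = m + m * n + (l : ℕ) := rfl
    omega
  | Sum.inr jl, Sum.inl l =>
    exfalso
    have h1 := keyFn_inr_lt m n jl
    have h2 : keyFn m n (Sum.inl l) = m + m * n + (l : ℕ) := rfl
    omega
  | Sum.inr ⟨j, l⟩, Sum.inr ⟨j', l'⟩ =>
    have hjm : (j : ℕ) < m := j.isLt
    have hjm' : (j' : ℕ) < m := j'.isLt
    have hln : (l : ℕ) < n := l.isLt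
    have hln' : (l' : ℕ) < n := l'.isLt
    have hn0 : 0 < n := l.pos
    simp only [keyFn] at hk
    split_ifs at hk with h1 h2 h2
    · simp only [Sum.inr.injEq, Prod.mk.injEq]
      exact ⟨Fin.ext (by omega), Fin.ext (by omega)⟩
    · exfalso; omega
    · exfalso; omega
    · have he : (l : ℕ) + (j : ℕ) * n = (l' : ℕ) + (j' : ℕ) * n := by omega
      have hl : (l : ℕ) = (l' : ℕ) := by
        have hmod := congrArg (· % n) he
        simpa [Nat.add_mul_mod_self_right, Nat.mod_eq_of_lt hln,
          Nat.mod_eq_of_lt hln'] using hmod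
      have hj : (j : ℕ) * n = (j' : ℕ) * n := by omega
      have hj' : (j : ℕ) = (j' : ℕ) := Nat.eq_of_mul_eq_mul_right hn0 hj
      simp only [Sum.inr.injEq, Prod.mk.injEq]
      exact ⟨Fin.ext hj', Fin.ext hl⟩

def wdeg (d : VT m n →₀ ℕ) : ℕ := ∑ l : Fin n, d (Sum.inl l)

def z0 : Fin (1 + (m + m * n + n)) := ⟨0, by omega⟩

def wdegHom : (VT m n →₀ ℕ) →+ ℕ where
  toFun := wdeg m n
  map_zero' := by simp [wdeg]
  map_add' a b := by simp [wdeg, Finsupp.add_apply, Finset.sum_add_distrib]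

noncomputable def toLexAddEquiv : (Fin (1 + (m + m * n + n)) →₀ ℕ) ≃+
    Lex (Fin (1 + (m + m * n + n)) →₀ ℕ) :=
  { toEquiv := toLex, map_add' := toLex_add }

noncomputable def psi : (VT m n →₀ ℕ) →+ Lex (Fin (1 + (m + m * n + n)) →₀ ℕ) :=
  (toLexAddEquiv m n).toAddMonoidHom.comp
    (((Finsupp.singleAddHom (z0 m n)).comp (wdegHom m n))
      + Finsupp.mapDomain.addMonoidHom (kappa m n))

lemma psi_apply (d : VT m n →₀ ℕ) :
    psi m n d = toLex (Finsupp.single (z0 m n) (wdeg m n d)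
      + Finsupp.mapDomain (kappa m n) d) := rfl

lemma kappa_ne_z0 (s : VT m n) : kappa m n s ≠ z0 m n := by
  intro h
  have := congrArg Fin.val h
  simp [kappa, z0] at this

lemma z0_notin_range : (z0 m n) ∉ Set.range (kappa m n) := by
  rintro ⟨s, hs⟩
  exact kappa_ne_z0 m n s hs

lemma psi_inj : Function.Injective (psi m n) := by
  intro a b h
  have h' : Finsupp.single (z0 m n) (wdeg m n a) + Finsupp.mapDomain (kappa m n) a
      = Finsupp.single (z0 m n) (wdeg m n b) + Finsupp.mapDomain (kappa m n) b :=
    toLex.injective h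
  ext s
  have h2 := DFunLike.congr_fun h' (kappa m n s)
  simp only [Finsupp.add_apply,
    Finsupp.single_eq_of_ne' (fun hc => kappa_ne_z0 m n s hc.symm),
    Finsupp.mapDomain_apply (kappa_inj m n)] at h2
  omega

lemma wdeg_single_inl (l : Fin n) (e : ℕ) :
    wdeg m n (Finsupp.single (Sum.inl l) e) = e := by
  simp only [wdeg, Finsupp.single_apply, Sum.inl.injEq]
  rw [Finset.sum_ite_eq]
  simp

lemma wdeg_single_inr (x : Fin m × Fin n) (e : ℕ) :
    wdeg m n (Finsupp.single (Sum.inr x) e) = 0 := by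
  simp [wdeg, Finsupp.single_apply]

/-- the exponent of the monomial `A_{j,l} X_l`. -/
noncomputable def expo (j : Fin m) (l : Fin n) : VT m n →₀ ℕ :=
  Finsupp.single (Sum.inl l) 1 + Finsupp.single (Sum.inr (j, l)) 1

lemma wdeg_expo (j : Fin m) (l : Fin n) : wdeg m n (expo m n j l) = 1 := by
  have : wdeg m n (expo m n j l)
      = wdeg m n (Finsupp.single (Sum.inl l) 1)
        + wdeg m n (Finsupp.single (Sum.inr (j, l)) 1) := by
    simp [wdeg, expo, Finsupp.add_apply, Finset.sum_add_distrib]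
  rw [this, wdeg_single_inl, wdeg_single_inr]

lemma ofLex_psi_expo (j : Fin m) (l : Fin n) (i : Fin (1 + (m + m * n + n))) :
    ofLex (psi m n (expo m n j l)) i
      = (if z0 m n = i then 1 else 0)
        + ((if kappa m n (Sum.inl l) = i then 1 else 0)
          + (if kappa m n (Sum.inr (j, l)) = i then 1 else 0)) := by
  rw [psi_apply, ofLex_toLex, wdeg_expo]
  rw [expo, Finsupp.mapDomain_add, Finsupp.mapDomain_single, Finsupp.mapDomain_single]
  simp [Finsupp.add_apply, Finsupp.single_apply]

lemma kappa_val_inl (l : Fin n) :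
    (kappa m n (Sum.inl l) : ℕ) = 1 + (m + m * n + (l : ℕ)) := rfl

lemma kappa_val_inr (j : Fin m) (l : Fin n) :
    (kappa m n (Sum.inr (j, l)) : ℕ)
      = 1 + (if (l : ℕ) = (j : ℕ) then (j : ℕ) else m + ((j : ℕ) * n + (l : ℕ))) := rfl

lemma psi_lt_wdeg_zero (d : VT m n →₀ ℕ) (hd : ∀ l, d (Sum.inl l) = 0)
    (j : Fin m) (l : Fin n) : psi m n d < psi m n (expo m n j l) := by
  rw [Finsupp.Lex.lt_iff]
  refine ⟨z0 m n, ?_, ?_⟩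
  · intro i' hi'
    exfalso
    have : (i' : ℕ) < (z0 m n : ℕ) := hi'
    simp [z0] at this
  · rw [ofLex_psi_expo, if_pos rfl]
    rw [psi_apply, ofLex_toLex]
    have hw : wdeg m n d = 0 := by simp [wdeg, hd]
    rw [Finsupp.add_apply, hw, Finsupp.single_apply, if_pos rfl,
      Finsupp.mapDomain_notin_range _ _ (z0_notin_range m n)]
    omega

lemma psi_lt_expo (j : Fin m) (l : Fin n) (jc : Fin n) (hjc : (jc : ℕ) = (j : ℕ))
    (hl : (l : ℕ) ≠ (j : ℕ)) :
    psi m n (expo m n j l) < psi m n (expo m n j jc) := by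
  have hjm : (j : ℕ) < m := j.isLt
  have hvtop : (kappa m n (Sum.inr (j, jc)) : ℕ) = 1 + (j : ℕ) := by
    rw [kappa_val_inr, if_pos hjc]
  have hvl : (kappa m n (Sum.inl l) : ℕ) = 1 + (m + m * n + (l : ℕ)) :=
    kappa_val_inl m n l
  have hvjc : (kappa m n (Sum.inl jc) : ℕ) = 1 + (m + m * n + (jc : ℕ)) :=
    kappa_val_inl m n jc
  have hvjl : (kappa m n (Sum.inr (j, l)) : ℕ)
      = 1 + (m + ((j : ℕ) * n + (l : ℕ))) := by
    rw [kappa_val_inr, if_neg hl]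
  have hvz : (z0 m n : ℕ) = 0 := rfl
  rw [Finsupp.Lex.lt_iff]
  refine ⟨kappa m n (Sum.inr (j, jc)), ?_, ?_⟩
  · intro i' hi'
    have hi'v : (i' : ℕ) < 1 + (j : ℕ) := by
      have h := hi'
      rw [Fin.lt_def, hvtop] at h
      exact h
    rw [ofLex_psi_expo, ofLex_psi_expo]
    have h1 : kappa m n (Sum.inl l) ≠ i' := by
      intro hc; have := congrArg Fin.val hc; omega
    have h2 : kappa m n (Sum.inr (j, l)) ≠ i' := by
      intro hc; have := congrArg Fin.val hc; omega
    have h3 : kappa m n (Sum.inl jc) ≠ i' := by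
      intro hc; have := congrArg Fin.val hc; omega
    have h4 : kappa m n (Sum.inr (j, jc)) ≠ i' := by
      intro hc; have := congrArg Fin.val hc; omega
    rw [if_neg h1, if_neg h2, if_neg h3, if_neg h4]
  · rw [ofLex_psi_expo, ofLex_psi_expo]
    have hz : z0 m n ≠ kappa m n (Sum.inr (j, jc)) := by
      intro hc; have := congrArg Fin.val hc; omega
    have h1 : kappa m n (Sum.inl l) ≠ kappa m n (Sum.inr (j, jc)) := by
      intro hc; have := congrArg Fin.val hc; omega
    have h2 : kappa m n (Sum.inr (j, l)) ≠ kappa m n (Sum.inr (j, jc)) := by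
      intro hc; have := congrArg Fin.val hc; omega
    have h3 : kappa m n (Sum.inl jc) ≠ kappa m n (Sum.inr (j, jc)) := by
      intro hc; have := congrArg Fin.val hc; omega
    rw [if_neg hz, if_neg h1, if_neg h2, if_neg h3, if_pos rfl]
    omega

end Application

section Application2

variable {R₀ : Type*} [CommRing R₀] (m n : ℕ) (hmn : m ≤ n)

noncomputable def mubig (j : Fin m) : VT m n →₀ ℕ :=
  expo m n j (Fin.castLE hmn j)

noncomputable def Pbig (c : Fin m → MvPolynomial (Fin m × Fin n) R₀) (j : Fin m) :
    MvPolynomial (VT m n) R₀ :=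
  (∑ l : Fin n, X (Sum.inr (j, l)) * X (Sum.inl l)) - rename Sum.inr (c j)

lemma XX_monomial (j : Fin m) (l : Fin n) :
    (X (Sum.inr (j, l)) * X (Sum.inl l) : MvPolynomial (VT m n) R₀)
      = monomial (expo m n j l) 1 := by
  rw [X, X, monomial_mul, one_mul]
  congr 1
  rw [expo, add_comm]

lemma rename_supp_zero (q : MvPolynomial (Fin m × Fin n) R₀) :
    ∀ d ∈ (rename Sum.inr q : MvPolynomial (VT m n) R₀).support,
      ∀ l : Fin n, d (Sum.inl l) = 0 := by
  intro d hd l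
  rw [MvPolynomial.support_rename_of_injective Sum.inr_injective] at hd
  obtain ⟨d', -, rfl⟩ := Finset.mem_image.mp hd
  exact Finsupp.mapDomain_notin_range _ _ (by rintro ⟨x, hx⟩; cases hx)

lemma Pbig_supp (c : Fin m → MvPolynomial (Fin m × Fin n) R₀) (j : Fin m) :
    ∀ d ∈ (Pbig m n c j).support, psi m n d ≤ psi m n (mubig m n hmn j) := by
  intro d hd
  rcases Finset.mem_union.mp (MvPolynomial.support_sub _ _ _ hd) with h | h
  · obtain ⟨l, -, hl⟩ := Finset.mem_biUnion.mp (MvPolynomial.support_sum h)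
    rw [XX_monomial] at hl
    have hd' : d = expo m n j l := Finset.mem_singleton.mp (support_monomial_subset hl)
    subst hd'
    by_cases hle : l = Fin.castLE hmn j
    · rw [hle]; exact le_rfl
    · refine le_of_lt (psi_lt_expo m n j l (Fin.castLE hmn j) rfl ?_)
      intro hc
      exact hle (Fin.ext hc)
  · exact le_of_lt (psi_lt_wdeg_zero m n d (rename_supp_zero m n (c j) d h) j
      (Fin.castLE hmn j))

lemma mubig_inl (j : Fin m) :
    (mubig m n hmn j) (Sum.inl (Fin.castLE hmn j)) = 1 := by
  rw [mubig, expo, Finsupp.add_apply, Finsupp.single_apply, if_pos rfl,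
    Finsupp.single_eq_of_ne' (by rintro ⟨⟩)]
  omega

lemma Pbig_coeff (c : Fin m → MvPolynomial (Fin m × Fin n) R₀) (j : Fin m) :
    coeff (mubig m n hmn j) (Pbig m n c j) = 1 := by
  rw [Pbig, coeff_sub]
  have hcoe : ∀ l : Fin n,
      coeff (mubig m n hmn j) (X (Sum.inr (j, l)) * X (Sum.inl l)
        : MvPolynomial (VT m n) R₀)
      = if l = Fin.castLE hmn j then 1 else 0 := by
    intro l
    rw [XX_monomial, coeff_monomial]
    by_cases hle : l = Fin.castLE hmn j
    · rw [if_pos hle, if_pos (by rw [hle]; rfl)]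
    · rw [if_neg hle, if_neg ?_]
      intro hc
      have h2 := DFunLike.congr_fun hc (Sum.inl l)
      rw [expo, mubig, expo, Finsupp.add_apply, Finsupp.add_apply,
        Finsupp.single_eq_same,
        Finsupp.single_eq_of_ne'
          (a := Sum.inr (j, l)) (a' := Sum.inl l) (fun h => by cases h),
        Finsupp.single_eq_of_ne'
          (a := Sum.inr (j, Fin.castLE hmn j)) (a' := Sum.inl l)
          (fun h => by cases h),
        Finsupp.single_eq_of_ne'
          (a := Sum.inl (Fin.castLE hmn j)) (a' := Sum.inl l)
          (fun h => hle (by rw [Sum.inl.injEq] at h; exact h.symm))] at h2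
      omega
  have h1 : coeff (mubig m n hmn j)
      (∑ l : Fin n, (X (Sum.inr (j, l)) * X (Sum.inl l) : MvPolynomial (VT m n) R₀))
      = 1 := by
    rw [MvPolynomial.coeff_sum]
    rw [Finset.sum_congr rfl fun l _ => hcoe l]
    rw [Finset.sum_ite_eq' Finset.univ (Fin.castLE hmn j) fun _ => (1 : R₀)]
    simp
  have h2 : coeff (mubig m n hmn j) (rename Sum.inr (c j)
      : MvPolynomial (VT m n) R₀) = 0 := by
    by_contra h
    have hz := rename_supp_zero m n (c j) _ (mem_support_iff.mpr h) (Fin.castLE hmn j)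
    rw [mubig_inl] at hz
    exact one_ne_zero hz
  rw [h1, h2, sub_zero]

lemma mubig_ne_zero {j : Fin m} {s : VT m n} (h : mubig m n hmn j s ≠ 0) :
    s = Sum.inl (Fin.castLE hmn j) ∨ s = Sum.inr (j, Fin.castLE hmn j) := by
  by_contra hc
  push_neg at hc
  apply h
  rw [mubig, expo, Finsupp.add_apply,
    Finsupp.single_eq_of_ne' (fun h' => hc.1 h'.symm),
    Finsupp.single_eq_of_ne' (fun h' => hc.2 h'.symm)]
  omega

lemma mubig_disj {j j' : Fin m} (hne : j ≠ j') (s : VT m n) :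
    mubig m n hmn j s = 0 ∨ mubig m n hmn j' s = 0 := by
  by_contra hc
  push_neg at hc
  rcases mubig_ne_zero m n hmn hc.1 with h1 | h1 <;>
    rcases mubig_ne_zero m n hmn hc.2 with h2 | h2 <;>
      rw [h1] at h2
  · rw [Sum.inl.injEq] at h2
    exact hne (Fin.castLE_injective hmn h2)
  · cases h2
  · cases h2
  · rw [Sum.inr.injEq, Prod.mk.injEq] at h2
    exact hne h2.1

noncomputable def EE : MvPolynomial (Fin n) (MvPolynomial (Fin m × Fin n) R₀)
    ≃+* MvPolynomial (VT m n) R₀ :=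
  ((sumAlgEquiv R₀ (Fin n) (Fin m × Fin n)).symm :
    MvPolynomial (Fin n) (MvPolynomial (Fin m × Fin n) R₀)
      ≃ₐ[R₀] MvPolynomial (VT m n) R₀).toRingEquiv

lemma EE_X (l : Fin n) :
    EE m n (R₀ := R₀) (X l) = X (Sum.inl l) := by
  show (sumAlgEquiv R₀ (Fin n) (Fin m × Fin n)).symm (X l) = _
  rw [sumAlgEquiv_symm_X]

lemma EE_C (r : MvPolynomial (Fin m × Fin n) R₀) :
    EE m n (C r) = rename Sum.inr r := by
  induction r using MvPolynomial.induction_on with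
  | C a =>
    show (sumAlgEquiv R₀ (Fin n) (Fin m × Fin n)).symm (C (C a)) = _
    rw [sumAlgEquiv_symm_C_C, rename_C]
  | add p q hp hq =>
    rw [map_add, map_add, hp, hq, map_add]
  | mul_X p a hp =>
    have hXa : EE m n (R₀ := R₀) (C (X a)) = X (Sum.inr a) := by
      show (sumAlgEquiv R₀ (Fin n) (Fin m × Fin n)).symm (C (X a)) = _
      rw [sumAlgEquiv_symm_C_X]
    rw [map_mul, map_mul, hp, hXa, map_mul, rename_X]

lemma EE_gen (c : Fin m → MvPolynomial (Fin m × Fin n) R₀) (j : Fin m) :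
    EE m n ((∑ l : Fin n, C (X (j, l)) * X l) - C (c j)) = Pbig m n c j := by
  rw [map_sub, map_sum, EE_C, Pbig]
  congr 1
  refine Finset.sum_congr rfl fun l _ => ?_
  rw [map_mul, EE_C, EE_X, rename_X]

lemma mem_span_equiv {A B : Type*} [CommRing A] [CommRing B] (e : A ≃+* B)
    (s : Set A) (x : A) : x ∈ Ideal.span s ↔ e x ∈ Ideal.span (⇑e '' s) := by
  constructor
  · intro h
    rw [← Ideal.map_span e s]
    exact Ideal.mem_map_of_mem e h
  · intro h
    rw [← Ideal.map_span e s, Ideal.mem_map_iff_of_surjective e e.surjective] at h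
    obtain ⟨y, hy, hyx⟩ := h
    rwa [← e.injective hyx]

end Application2

end Stmt13Aux


set_option maxHeartbeats 1000000 in
open Stmt13Aux in
/-- Proposition `p:regular-seq-inhomog`: over
`R = R₀[{A_{ij}}]` (realized as `MvPolynomial (Fin m × Fin n) R₀`) and
`S = R[X₁, …, X_n]` (realized as `MvPolynomial (Fin n) R`), the inhomogeneous generic
linear polynomials `L_i = ∑_j A_{ij} X_j − c_i` (with arbitrary constants `c_i ∈ R`)
form a regular sequence when `m ≤ n`: the image of each `L_i` in
`S/(L₁, …, L_{i−1})` is a non-zero-divisor. -/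
theorem stmt13 {R₀ : Type*} [CommRing R₀] (m n : ℕ) (hm : 0 < m) (hn : 0 < n)
    (hmn : m ≤ n)
    (c : Fin m → MvPolynomial (Fin m × Fin n) R₀) :
    ∀ i : Fin m,
      Ideal.Quotient.mk
        (Ideal.span {p : MvPolynomial (Fin n) (MvPolynomial (Fin m × Fin n) R₀) |
          ∃ j : Fin m, j < i ∧
            p = (∑ l : Fin n, C (X (j, l)) * X l) - C (c j)})
        ((∑ l : Fin n, C (X (i, l)) * X l) - C (c i))
      ∈ nonZeroDivisors _ := by
  intro i
  rw [mem_nonZeroDivisors_iff]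
  refine (fun H => ⟨fun x hx => H x ?_, H⟩) ?_
  swap
  · obtain ⟨f, rfl⟩ := Ideal.Quotient.mk_surjective x
    rw [← map_mul, mul_comm, map_mul] at hx
    exact hx
  intro z hz
  obtain ⟨f, rfl⟩ := Ideal.Quotient.mk_surjective z
  rw [← map_mul, Ideal.Quotient.eq_zero_iff_mem] at hz
  rw [Ideal.Quotient.eq_zero_iff_mem]
  set S : Set (MvPolynomial (Fin n) (MvPolynomial (Fin m × Fin n) R₀)) :=
    {p | ∃ j : Fin m, j < i ∧
      p = (∑ l : Fin n, C (X (j, l)) * X l) - C (c j)} with hS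
  set F : Fin i.val → Fin m := fun j => ⟨j.val, j.isLt.trans i.isLt⟩ with hF
  set P : Fin i.val → MvPolynomial (VT m n) R₀ := fun j => Pbig m n c (F j) with hP
  have himg : ⇑(EE m n (R₀ := R₀)) '' S = Set.range P := by
    ext q
    constructor
    · rintro ⟨p, ⟨j, hji, rfl⟩, rfl⟩
      refine ⟨⟨j.val, hji⟩, ?_⟩
      simp only [hP, hF]
      have hFj : (⟨(⟨j.val, hji⟩ : Fin i.val).val, (⟨j.val, hji⟩ : Fin i.val).isLt.trans i.isLt⟩ : Fin m) = j :=
        Fin.ext rfl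
      rw [hFj, EE_gen]
    · rintro ⟨j, rfl⟩
      refine ⟨(∑ l : Fin n, C (X (F j, l)) * X l) - C (c (F j)),
        ⟨F j, (show (F j : Fin m) < i from j.isLt), rfl⟩, ?_⟩
      rw [EE_gen]
  rw [mem_span_equiv (EE m n) S, himg] at hz ⊢
  rw [map_mul, EE_gen] at hz
  refine reg (psi m n) (psi_inj m n) P (fun j => mubig m n hmn (F j))
    (fun j => Pbig_coeff m n hmn c (F j))
    (fun j => Pbig_supp m n hmn c (F j))
    (fun j j' hne => mubig_disj m n hmn ?_)
    (Pbig m n c i) (mubig m n hmn i)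
    (Pbig_coeff m n hmn c i) (Pbig_supp m n hmn c i)
    (fun j => mubig_disj m n hmn ?_) (EE m n f) hz
  · intro hc
    apply hne
    have h2 := congrArg Fin.val hc
    exact Fin.ext (show (j : ℕ) = (j' : ℕ) from h2)
  · intro hc
    have h2 := congrArg Fin.val hc
    have h3 : (j : ℕ) = (i : ℕ) := h2
    have h4 : (j : ℕ) < i.val := j.isLt
    omega
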